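/- arXiv:2110.12343 — 6 statements merged into one kernel-verified Lean document; each statement's English description precedes it below -/
import Mathlib

section
/- Change-of-measure identity for partial-history importance weighting (unbiasedness part of Lemma 1, finite-state form): Let S and A be nonempty finite types, let (P^a)_{a∈A} be row-stochastic matrices on S, let e and π be policies on (S, A) with e(s,a) > 0 for all s ∈ S and a ∈ A, let d be a probability vector on S, let k ∈ ℕ, and let r : S → A → ℝ. Then the importance-weighted sum over all trajectories, namely the sum over (s₁,…,s_{k+1}) ∈ S^{k+1} and (a₁,…,a_{k+1}) ∈ A^{k+1} of d(s₁) · (∏_{h=1}^{k+1} e(s_h, a_h)) · (∏_{h=1}^{k} P^{a_h}(s_h, s_{h+1})) · (∏_{h=1}^{k+1} π(s_h, a_h)/e(s_h, a_h)) · r(s_{k+1}, a_{k+1}), equals Σ_{s∈S} Σ_{a∈A} (d ⬝ (P^π)^k)(s) · π(s, a) · r(s, a), i.e., the expectation of r under the distribution obtained from d by k steps of the target-policy transition matrix P^π, followed by the target policy's action distribution. -/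
open Finset

/-- Row action of a matrix `M` on a vector `f`: `(f ⬝ M) s' = ∑ s, f s * M s s'`. -/
def rowAct {S : Type*} [Fintype S] (M : S → S → ℝ) (f : S → ℝ) : S → ℝ :=
  fun s' => ∑ s, f s * M s s'

/-- A row-stochastic matrix. -/
def IsStochastic {S : Type*} [Fintype S] (M : S → S → ℝ) : Prop :=
  (∀ s s', 0 ≤ M s s') ∧ ∀ s, ∑ s', M s s' = 1

/-- A probability vector. -/
def IsProbVec {S : Type*} [Fintype S] (f : S → ℝ) : Prop :=
  (∀ s, 0 ≤ f s) ∧ ∑ s, f s = 1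

/-- Markov chain trajectory sum. -/
lemma chain_aux {S : Type*} [Fintype S] (Q : S → S → ℝ) :
    ∀ (k : ℕ) (d g : S → ℝ),
      (∑ s : Fin (k + 1) → S,
          d (s 0) * (∏ h : Fin k, Q (s h.castSucc) (s h.succ)) * g (s (Fin.last k)))
        = ∑ x, (rowAct Q)^[k] d x * g x := by
  intro k
  induction k with
  | zero =>
    intro d g
    rw [← Equiv.sum_comp (Equiv.funUnique (Fin 1) S).symm]
    simp [Equiv.funUnique, Fin.last]
  | succ k ih =>
    intro d g
    rw [← Equiv.sum_comp (Fin.consEquiv (fun _ : Fin (k + 2) => S))]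
    rw [Fintype.sum_prod_type]
    have key : ∀ (x : S) (t : Fin (k + 1) → S),
        (Fin.consEquiv (fun _ : Fin (k + 2) => S)) (x, t) = (Fin.cons x t : Fin (k + 2) → S) := by
      intro x t; rfl
    simp only [key]
    have step : ∀ (x : S) (t : Fin (k + 1) → S),
        d ((Fin.cons x t : Fin (k + 2) → S) 0) *
            (∏ h : Fin (k + 1), Q ((Fin.cons x t : Fin (k + 2) → S) h.castSucc)
              ((Fin.cons x t : Fin (k + 2) → S) h.succ)) *
            g ((Fin.cons x t : Fin (k + 2) → S) (Fin.last (k + 1)))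
          = (d x * Q x (t 0)) *
              ((∏ h : Fin k, Q (t h.castSucc) (t h.succ)) * g (t (Fin.last k))) := by
      intro x t
      rw [Fin.prod_univ_succ]
      have h1 : ∀ i : Fin k, (Fin.cons x t : Fin (k + 2) → S) (i.succ).castSucc = t i.castSucc := by
        intro i
        rw [← Fin.succ_castSucc, Fin.cons_succ]
      have h2 : ∀ i : Fin k, (Fin.cons x t : Fin (k + 2) → S) (i.succ).succ = t i.succ := by
        intro i; rw [Fin.cons_succ]
      have h3 : (Fin.cons x t : Fin (k + 2) → S) (Fin.last (k + 1)) = t (Fin.last k) := by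
        rw [← Fin.succ_last, Fin.cons_succ]
      simp only [h1, h2, h3, Fin.castSucc_zero, Fin.cons_zero, Fin.cons_succ]
      ring
    simp only [step]
    rw [show (rowAct Q)^[k + 1] d = (rowAct Q)^[k] (rowAct Q d) from
      Function.iterate_succ_apply _ _ _]
    rw [← ih (rowAct Q d) g]
    rw [Finset.sum_comm]
    apply Finset.sum_congr rfl
    intro t _
    rw [← Finset.sum_mul]
    have hr : rowAct Q d (t 0) = ∑ i, d i * Q i (t 0) := rfl
    rw [hr]
    ring

/-- Change-of-measure identity for partial-history importance weighting:
the importance-weighted trajectory sum equals the expectation of `r` under the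
distribution obtained from `d` by `k` steps of the target-policy transition
matrix `P^π`, followed by the target policy's action distribution. -/
theorem partial_history_change_of_measure
    {S A : Type*} [Fintype S] [Nonempty S] [Fintype A] [Nonempty A]
    (P : A → S → S → ℝ) (hP : ∀ a, IsStochastic (P a))
    (e π : S → A → ℝ)
    (he : ∀ s, IsProbVec (e s)) (hπ : ∀ s, IsProbVec (π s))
    (hepos : ∀ s a, 0 < e s a)
    (d : S → ℝ) (hd : IsProbVec d)
    (k : ℕ) (r : S → A → ℝ) :
    (∑ s : Fin (k + 1) → S, ∑ a : Fin (k + 1) → A,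
        d (s 0) * (∏ h, e (s h) (a h)) *
          (∏ h : Fin k, P (a h.castSucc) (s h.castSucc) (s h.succ)) *
          (∏ h, π (s h) (a h) / e (s h) (a h)) *
          r (s (Fin.last k)) (a (Fin.last k)))
      = ∑ s : S, ∑ a : A,
          ((rowAct (fun x x' => ∑ b, π x b * P b x x'))^[k] d) s * π s a * r s a := by
  have inner : ∀ s : Fin (k + 1) → S,
      (∑ a : Fin (k + 1) → A,
          d (s 0) * (∏ h, e (s h) (a h)) *
            (∏ h : Fin k, P (a h.castSucc) (s h.castSucc) (s h.succ)) *
            (∏ h, π (s h) (a h) / e (s h) (a h)) *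
            r (s (Fin.last k)) (a (Fin.last k)))
        = d (s 0) *
            (∏ h : Fin k, ∑ b, π (s h.castSucc) b * P b (s h.castSucc) (s h.succ)) *
            (∑ b, π (s (Fin.last k)) b * r (s (Fin.last k)) b) := by
    intro s
    set g : Fin (k + 1) → A → ℝ := fun h b =>
      Fin.lastCases (π (s (Fin.last k)) b * r (s (Fin.last k)) b)
        (fun i => π (s i.castSucc) b * P b (s i.castSucc) (s i.succ)) h with hg
    have hsummand : ∀ a : Fin (k + 1) → A,
        d (s 0) * (∏ h, e (s h) (a h)) *
            (∏ h : Fin k, P (a h.castSucc) (s h.castSucc) (s h.succ)) *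
            (∏ h, π (s h) (a h) / e (s h) (a h)) *
            r (s (Fin.last k)) (a (Fin.last k))
          = d (s 0) * ∏ h, g h (a h) := by
      intro a
      have hcancel : (∏ h, e (s h) (a h)) * (∏ h, π (s h) (a h) / e (s h) (a h))
          = ∏ h, π (s h) (a h) := by
        rw [← Finset.prod_mul_distrib]
        apply Finset.prod_congr rfl
        intro h _
        rw [mul_comm, div_mul_cancel₀ _ (hepos (s h) (a h)).ne']
      have hprod : (∏ h, g h (a h))
          = (∏ i : Fin k,
              π (s i.castSucc) (a i.castSucc) * P (a i.castSucc) (s i.castSucc) (s i.succ)) *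
            (π (s (Fin.last k)) (a (Fin.last k)) * r (s (Fin.last k)) (a (Fin.last k))) := by
        rw [Fin.prod_univ_castSucc]
        congr 1
        · apply Finset.prod_congr rfl; intro i _; simp [hg]
        · simp [hg]
      have hπsplit : (∏ h, π (s h) (a h))
          = (∏ i : Fin k, π (s i.castSucc) (a i.castSucc)) * π (s (Fin.last k)) (a (Fin.last k)) :=
        Fin.prod_univ_castSucc _
      have hre : d (s 0) * (∏ h, e (s h) (a h)) *
            (∏ h : Fin k, P (a h.castSucc) (s h.castSucc) (s h.succ)) *
            (∏ h, π (s h) (a h) / e (s h) (a h)) *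
            r (s (Fin.last k)) (a (Fin.last k))
          = d (s 0) * ((∏ h, e (s h) (a h)) * (∏ h, π (s h) (a h) / e (s h) (a h))) *
            (∏ h : Fin k, P (a h.castSucc) (s h.castSucc) (s h.succ)) *
            r (s (Fin.last k)) (a (Fin.last k)) := by ring
      rw [hre, hcancel, hπsplit, hprod, Finset.prod_mul_distrib]
      ring
    rw [Finset.sum_congr rfl (fun a _ => hsummand a), ← Finset.mul_sum]
    have hfac : (∑ a : Fin (k + 1) → A, ∏ h, g h (a h)) = ∏ h, ∑ b, g h b := by
      rw [Finset.prod_univ_sum]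
      rw [Fintype.piFinset_univ]
    rw [hfac, Fin.prod_univ_castSucc fun h => ∑ b, g h b]
    simp only [hg, Fin.lastCases_castSucc, Fin.lastCases_last]
    ring
  rw [Finset.sum_congr rfl (fun s _ => inner s)]
  rw [chain_aux (fun x x' => ∑ b, π x b * P b x x') k d
    (fun x => ∑ b, π x b * r x b)]
  apply Finset.sum_congr rfl
  intro x _
  rw [Finset.mul_sum]
  apply Finset.sum_congr rfl
  intro b _
  ring
end

section
/- Cross-block decorrelation bound (key step in the covariance bound of Lemma 2): Let S be a nonempty finite type, let A and B be row-stochastic matrices on S that are, respectively, γ_A- and γ_B-contractions in total variation with γ_A, γ_B ∈ [0,1], and let d be a probability vector on S with d ⬝ B = d (stationary for B). Then for all m, k ∈ ℕ, ‖(d ⬝ B^m ⬝ A^k) − (d ⬝ A^{k+1} ⬝ B^m ⬝ A^k)‖₁ ≤ 2 · γ_B^m · γ_A^k. -/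
open Finset

/-- The ℓ1 norm of a vector on a finite type. -/
def l1 {S : Type*} [Fintype S] (f : S → ℝ) : ℝ := ∑ s, |f s|

lemma rowAct_prob {S : Type*} [Fintype S] {M : S → S → ℝ} (hM : IsStochastic M)
    {f : S → ℝ} (hf : IsProbVec f) : IsProbVec (rowAct M f) := by
  constructor
  · intro s'
    exact Finset.sum_nonneg fun s _ => mul_nonneg (hf.1 s) (hM.1 s s')
  · rw [show (∑ s', rowAct M f s') = ∑ s', ∑ s, f s * M s s' from rfl,
      Finset.sum_comm]
    simp_rw [← Finset.mul_sum, hM.2, mul_one, hf.2]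

lemma rowAct_iter_prob {S : Type*} [Fintype S] {M : S → S → ℝ} (hM : IsStochastic M)
    {f : S → ℝ} (hf : IsProbVec f) (n : ℕ) : IsProbVec ((rowAct M)^[n] f) := by
  induction n with
  | zero => simpa
  | succ n ih => rw [Function.iterate_succ_apply']; exact rowAct_prob hM ih

lemma iter_contract {S : Type*} [Fintype S] {M : S → S → ℝ} (hM : IsStochastic M)
    {γ : ℝ} (hγ : 0 ≤ γ)
    (hc : ∀ f f' : S → ℝ, IsProbVec f → IsProbVec f' →
      l1 (fun s => rowAct M f s - rowAct M f' s) ≤ γ * l1 (fun s => f s - f' s))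
    {f f' : S → ℝ} (hf : IsProbVec f) (hf' : IsProbVec f') (n : ℕ) :
    l1 (fun s => (rowAct M)^[n] f s - (rowAct M)^[n] f' s)
      ≤ γ ^ n * l1 (fun s => f s - f' s) := by
  induction n with
  | zero => simp
  | succ n ih =>
    rw [Function.iterate_succ_apply', Function.iterate_succ_apply']
    calc l1 (fun s => rowAct M ((rowAct M)^[n] f) s - rowAct M ((rowAct M)^[n] f') s)
        ≤ γ * l1 (fun s => (rowAct M)^[n] f s - (rowAct M)^[n] f' s) :=
          hc _ _ (rowAct_iter_prob hM hf n) (rowAct_iter_prob hM hf' n)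
      _ ≤ γ * (γ ^ n * l1 (fun s => f s - f' s)) := by
          exact mul_le_mul_of_nonneg_left ih hγ
      _ = γ ^ (n + 1) * l1 (fun s => f s - f' s) := by ring

lemma l1_diff_le_two {S : Type*} [Fintype S] {f f' : S → ℝ}
    (hf : IsProbVec f) (hf' : IsProbVec f') :
    l1 (fun s => f s - f' s) ≤ 2 := by
  calc l1 (fun s => f s - f' s) ≤ ∑ s, (|f s| + |f' s|) :=
        Finset.sum_le_sum fun s _ => abs_sub (f s) (f' s)
    _ = 2 := by
        rw [Finset.sum_add_distrib]
        have h1 : ∑ s, |f s| = 1 := by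
          rw [← hf.2]; exact Finset.sum_congr rfl fun s _ => abs_of_nonneg (hf.1 s)
        have h2 : ∑ s, |f' s| = 1 := by
          rw [← hf'.2]; exact Finset.sum_congr rfl fun s _ => abs_of_nonneg (hf'.1 s)
        rw [h1, h2]; norm_num

/-- Cross-block decorrelation bound: with `d` stationary for `B`,
`‖d B^m A^k − d A^{k+1} B^m A^k‖₁ ≤ 2 γ_B^m γ_A^k`. -/
theorem cross_block_decorrelation
    {S : Type*} [Fintype S] [Nonempty S]
    (A B : S → S → ℝ) (hA : IsStochastic A) (hB : IsStochastic B)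
    (γA γB : ℝ) (hγA : γA ∈ Set.Icc (0 : ℝ) 1) (hγB : γB ∈ Set.Icc (0 : ℝ) 1)
    (hcA : ∀ f f' : S → ℝ, IsProbVec f → IsProbVec f' →
      l1 (fun s => rowAct A f s - rowAct A f' s) ≤ γA * l1 (fun s => f s - f' s))
    (hcB : ∀ f f' : S → ℝ, IsProbVec f → IsProbVec f' →
      l1 (fun s => rowAct B f s - rowAct B f' s) ≤ γB * l1 (fun s => f s - f' s))
    (d : S → ℝ) (hd : IsProbVec d) (hstat : rowAct B d = d) (m k : ℕ) :
    l1 (fun s => ((rowAct A)^[k] ((rowAct B)^[m] d)) s -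
        ((rowAct A)^[k] ((rowAct B)^[m] ((rowAct A)^[k + 1] d))) s)
      ≤ 2 * γB ^ m * γA ^ k := by
  have hdA : IsProbVec ((rowAct A)^[k + 1] d) := rowAct_iter_prob hA hd (k + 1)
  have hBd : IsProbVec ((rowAct B)^[m] d) := rowAct_iter_prob hB hd m
  have hBdA : IsProbVec ((rowAct B)^[m] ((rowAct A)^[k + 1] d)) :=
    rowAct_iter_prob hB hdA m
  have step1 : l1 (fun s => (rowAct B)^[m] d s -
      (rowAct B)^[m] ((rowAct A)^[k + 1] d) s) ≤ γB ^ m * 2 := by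
    calc _ ≤ γB ^ m * l1 (fun s => d s - (rowAct A)^[k + 1] d s) :=
          iter_contract hB hγB.1 hcB hd hdA m
      _ ≤ γB ^ m * 2 := mul_le_mul_of_nonneg_left (l1_diff_le_two hd hdA)
          (pow_nonneg hγB.1 m)
  calc l1 (fun s => ((rowAct A)^[k] ((rowAct B)^[m] d)) s -
        ((rowAct A)^[k] ((rowAct B)^[m] ((rowAct A)^[k + 1] d))) s)
      ≤ γA ^ k * l1 (fun s => (rowAct B)^[m] d s -
          (rowAct B)^[m] ((rowAct A)^[k + 1] d) s) :=
        iter_contract hA hγA.1 hcA hBd hBdA k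
    _ ≤ γA ^ k * (γB ^ m * 2) := mul_le_mul_of_nonneg_left step1 (pow_nonneg hγA.1 k)
    _ = 2 * γB ^ m * γA ^ k := by ring
end

section
/- Weighted second-moment bound under overlap (variance component of Lemma 2, finite-state form): Let S and A be nonempty finite types, let (P^a)_{a∈A} be row-stochastic matrices on S, let e and π be policies on (S, A) with e(s,a) > 0 for all s, a, and suppose π satisfies ζ-overlap with respect to e for some ζ ≥ 0, i.e., π(s,a) ≤ exp(ζ) · e(s,a) for all s, a. Let d be a probability vector on S, k ∈ ℕ, and m₂ : S → A → ℝ with 0 ≤ m₂(s,a) ≤ M₂ for all s, a, where M₂ ≥ 0. Then the sum over all trajectories (s₁,…,s_{k+1}) ∈ S^{k+1} and (a₁,…,a_{k+1}) ∈ A^{k+1} of d(s₁) · (∏_{h=1}^{k+1} e(s_h, a_h)) · (∏_{h=1}^{k} P^{a_h}(s_h, s_{h+1})) · (∏_{h=1}^{k+1} (π(s_h,a_h)/e(s_h,a_h))²) · m₂(s_{k+1}, a_{k+1}) is at most M₂ · exp(ζ·(k+1)). -/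
open Finset

lemma traj_sum_one {S A : Type*} [Fintype S] [Fintype A]
    (P : A → S → S → ℝ) (hP : ∀ a, IsStochastic (P a))
    (π : S → A → ℝ) (hπ : ∀ s, IsProbVec (π s)) :
    ∀ (k : ℕ) (d : S → ℝ), IsProbVec d →
      (∑ s : Fin (k + 1) → S, ∑ a : Fin (k + 1) → A,
        d (s 0) * (∏ h, π (s h) (a h)) *
          (∏ h : Fin k, P (a h.castSucc) (s h.castSucc) (s h.succ))) = 1 := by
  intro k
  induction k with
  | zero =>
    intro d hd
    rw [← Equiv.sum_comp (Equiv.funUnique (Fin 1) S).symm]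
    simp only [Equiv.funUnique_symm_apply, Function.const_apply, Fin.prod_univ_zero, mul_one]
    calc (∑ y : S, ∑ a : Fin 1 → A, d y * ∏ h, π y (a h))
        = ∑ y : S, d y * 1 := by
          refine Finset.sum_congr rfl fun y _ => ?_
          rw [← Equiv.sum_comp (Equiv.funUnique (Fin 1) A).symm]
          simp only [Equiv.funUnique_symm_apply, Function.const_apply, Fin.prod_univ_one]
          rw [← Finset.mul_sum]; norm_num [(hπ y).2]
      _ = 1 := by simp [hd.2]
  | succ k ih =>
    intro d hd
    set d' : S → ℝ := fun s1 => ∑ s0, ∑ a0, d s0 * π s0 a0 * P a0 s0 s1 with hd'def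
    have hd' : IsProbVec d' := by
      constructor
      · intro s1
        refine Finset.sum_nonneg fun s0 _ => Finset.sum_nonneg fun a0 _ => ?_
        exact mul_nonneg (mul_nonneg (hd.1 s0) ((hπ s0).1 a0)) ((hP a0).1 s0 s1)
      · rw [Finset.sum_comm]
        calc ∑ s0, ∑ s1, ∑ a0, d s0 * π s0 a0 * P a0 s0 s1
            = ∑ s0, ∑ a0, ∑ s1, d s0 * π s0 a0 * P a0 s0 s1 := by
              exact Finset.sum_congr rfl fun s0 _ => by rw [Finset.sum_comm]
          _ = ∑ s0, ∑ a0, d s0 * π s0 a0 := by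
              refine Finset.sum_congr rfl fun s0 _ => Finset.sum_congr rfl fun a0 _ => ?_
              rw [← Finset.mul_sum, (hP a0).2, mul_one]
          _ = ∑ s0, d s0 := by
              refine Finset.sum_congr rfl fun s0 _ => ?_
              rw [← Finset.mul_sum, (hπ s0).2, mul_one]
          _ = 1 := hd.2
    rw [← Equiv.sum_comp (Fin.consEquiv fun _ : Fin (k + 2) => S), Fintype.sum_prod_type]
    simp only [← (Fin.consEquiv fun _ : Fin (k + 2) => A).sum_comp]
    simp only [Fintype.sum_prod_type, Fin.consEquiv_apply, Fin.cons_zero,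
      Fin.prod_univ_succ, Fin.cons_succ, ← Fin.succ_castSucc, Fin.castSucc_zero]
    have step : ∀ (s' : Fin (k + 1) → S) (a' : Fin (k + 1) → A),
        (∑ s0 : S, ∑ a0 : A,
          d s0 * (π s0 a0 * (π (s' 0) (a' 0) * ∏ x : Fin k, π (s' x.succ) (a' x.succ))) *
            (P a0 s0 (s' 0) * ∏ x : Fin k, P (a' x.castSucc) (s' x.castSucc) (s' x.succ)))
        = (d' (s' 0) * ∏ h, π (s' h) (a' h)) *
            ∏ h : Fin k, P (a' h.castSucc) (s' h.castSucc) (s' h.succ) := by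
      intro s' a'
      rw [Fin.prod_univ_succ, hd'def]
      simp only [Finset.sum_mul]
      exact Finset.sum_congr rfl fun s0 _ => Finset.sum_congr rfl fun a0 _ => by ring
    refine Eq.trans ?_ (ih d' hd')
    rw [Finset.sum_comm]
    refine Finset.sum_congr rfl fun s' _ => ?_
    conv_lhs => enter [2, s0]; rw [Finset.sum_comm]
    rw [Finset.sum_comm]
    exact Finset.sum_congr rfl fun a' _ => step s' a'

/-- Weighted second-moment bound under overlap: the trajectory sum with squared
importance ratios and a payoff bounded by `M₂` is at most `M₂ * exp (ζ * (k+1))`. -/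
theorem weighted_second_moment_bound
    {S A : Type*} [Fintype S] [Nonempty S] [Fintype A] [Nonempty A]
    (P : A → S → S → ℝ) (hP : ∀ a, IsStochastic (P a))
    (e π : S → A → ℝ)
    (he : ∀ s, IsProbVec (e s)) (hπ : ∀ s, IsProbVec (π s))
    (hepos : ∀ s a, 0 < e s a)
    (ζ : ℝ) (hζ : 0 ≤ ζ) (hover : ∀ s a, π s a ≤ Real.exp ζ * e s a)
    (d : S → ℝ) (hd : IsProbVec d) (k : ℕ)
    (M₂ : ℝ) (hM₂ : 0 ≤ M₂)
    (m₂ : S → A → ℝ) (hm₂ : ∀ s a, 0 ≤ m₂ s a ∧ m₂ s a ≤ M₂) :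
    (∑ s : Fin (k + 1) → S, ∑ a : Fin (k + 1) → A,
        d (s 0) * (∏ h, e (s h) (a h)) *
          (∏ h : Fin k, P (a h.castSucc) (s h.castSucc) (s h.succ)) *
          (∏ h, (π (s h) (a h) / e (s h) (a h)) ^ 2) *
          m₂ (s (Fin.last k)) (a (Fin.last k)))
      ≤ M₂ * Real.exp (ζ * (k + 1)) := by
  have hexpk : Real.exp ζ ^ (k + 1) = Real.exp (ζ * (k + 1)) := by
    rw [← Real.exp_nat_mul]; push_cast; ring_nf
  have key : ∀ (s : Fin (k + 1) → S) (a : Fin (k + 1) → A),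
      d (s 0) * (∏ h, e (s h) (a h)) *
          (∏ h : Fin k, P (a h.castSucc) (s h.castSucc) (s h.succ)) *
          (∏ h, (π (s h) (a h) / e (s h) (a h)) ^ 2) *
          m₂ (s (Fin.last k)) (a (Fin.last k))
        ≤ (M₂ * Real.exp (ζ * (k + 1))) *
            (d (s 0) * (∏ h, π (s h) (a h)) *
              ∏ h : Fin k, P (a h.castSucc) (s h.castSucc) (s h.succ)) := by
    intro s a
    have hd0 : 0 ≤ d (s 0) := hd.1 _
    have hPnn : 0 ≤ ∏ h : Fin k, P (a h.castSucc) (s h.castSucc) (s h.succ) :=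
      Finset.prod_nonneg fun h _ => (hP _).1 _ _
    have hee : 0 ≤ ∏ h, e (s h) (a h) :=
      Finset.prod_nonneg fun h _ => (hepos _ _).le
    have hr : 0 ≤ ∏ h, (π (s h) (a h) / e (s h) (a h)) ^ 2 :=
      Finset.prod_nonneg fun h _ => sq_nonneg _
    have h1 : (∏ h, e (s h) (a h)) * (∏ h, (π (s h) (a h) / e (s h) (a h)) ^ 2)
        ≤ Real.exp (ζ * (k + 1)) * ∏ h, π (s h) (a h) := by
      rw [← Finset.prod_mul_distrib]
      calc (∏ h, e (s h) (a h) * (π (s h) (a h) / e (s h) (a h)) ^ 2)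
          ≤ ∏ h, Real.exp ζ * π (s h) (a h) := by
            refine Finset.prod_le_prod (fun h _ => mul_nonneg (hepos _ _).le (sq_nonneg _))
              (fun h _ => ?_)
            have hep := hepos (s h) (a h)
            have hπn := (hπ (s h)).1 (a h)
            have heq : e (s h) (a h) * (π (s h) (a h) / e (s h) (a h)) ^ 2
                = π (s h) (a h) ^ 2 / e (s h) (a h) := by
              field_simp
            rw [heq, div_le_iff₀ hep, sq]
            calc π (s h) (a h) * π (s h) (a h)
                ≤ (Real.exp ζ * e (s h) (a h)) * π (s h) (a h) :=
                  mul_le_mul_of_nonneg_right (hover _ _) hπn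
              _ = Real.exp ζ * π (s h) (a h) * e (s h) (a h) := by ring
        _ = Real.exp (ζ * (k + 1)) * ∏ h, π (s h) (a h) := by
            rw [Finset.prod_mul_distrib, Finset.prod_const, Finset.card_univ,
              Fintype.card_fin, hexpk]
    calc d (s 0) * (∏ h, e (s h) (a h)) *
          (∏ h : Fin k, P (a h.castSucc) (s h.castSucc) (s h.succ)) *
          (∏ h, (π (s h) (a h) / e (s h) (a h)) ^ 2) *
          m₂ (s (Fin.last k)) (a (Fin.last k))
        ≤ d (s 0) * (∏ h, e (s h) (a h)) *
          (∏ h : Fin k, P (a h.castSucc) (s h.castSucc) (s h.succ)) *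
          (∏ h, (π (s h) (a h) / e (s h) (a h)) ^ 2) * M₂ :=
          mul_le_mul_of_nonneg_left (hm₂ _ _).2
            (by positivity)
      _ = (d (s 0) * ∏ h : Fin k, P (a h.castSucc) (s h.castSucc) (s h.succ)) *
          ((∏ h, e (s h) (a h)) * (∏ h, (π (s h) (a h) / e (s h) (a h)) ^ 2)) * M₂ := by
          ring
      _ ≤ (d (s 0) * ∏ h : Fin k, P (a h.castSucc) (s h.castSucc) (s h.succ)) *
          (Real.exp (ζ * (k + 1)) * ∏ h, π (s h) (a h)) * M₂ :=
          mul_le_mul_of_nonneg_right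
            (mul_le_mul_of_nonneg_left h1 (mul_nonneg hd0 hPnn)) hM₂
      _ = (M₂ * Real.exp (ζ * (k + 1))) *
            (d (s 0) * (∏ h, π (s h) (a h)) *
              ∏ h : Fin k, P (a h.castSucc) (s h.castSucc) (s h.succ)) := by ring
  calc (∑ s : Fin (k + 1) → S, ∑ a : Fin (k + 1) → A,
        d (s 0) * (∏ h, e (s h) (a h)) *
          (∏ h : Fin k, P (a h.castSucc) (s h.castSucc) (s h.succ)) *
          (∏ h, (π (s h) (a h) / e (s h) (a h)) ^ 2) *
          m₂ (s (Fin.last k)) (a (Fin.last k)))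
      ≤ ∑ s : Fin (k + 1) → S, ∑ a : Fin (k + 1) → A,
          (M₂ * Real.exp (ζ * (k + 1))) *
            (d (s 0) * (∏ h, π (s h) (a h)) *
              ∏ h : Fin k, P (a h.castSucc) (s h.castSucc) (s h.succ)) :=
        Finset.sum_le_sum fun s _ => Finset.sum_le_sum fun a _ => key s a
    _ = (M₂ * Real.exp (ζ * (k + 1))) *
          ∑ s : Fin (k + 1) → S, ∑ a : Fin (k + 1) → A,
            d (s 0) * (∏ h, π (s h) (a h)) *
              ∏ h : Fin k, P (a h.castSucc) (s h.castSucc) (s h.succ) := by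
        simp_rw [← Finset.mul_sum]
    _ = M₂ * Real.exp (ζ * (k + 1)) := by
        rw [traj_sum_one P hP π hπ k d hd, mul_one]
end

section
/- Overlapping-block cross-moment bound (covariance bound for overlapping windows in the proof of Lemma 2, finite-state form): Let S and A be nonempty finite types, let (P^a)_{a∈A} be row-stochastic matrices on S, let e and π be policies on (S, A) with e(s,a) > 0 for all s, a, and suppose π satisfies ζ-overlap with respect to e for some ζ ≥ 0. Let d be a probability vector on S, let k ∈ ℕ and 1 ≤ j ≤ k, and let r : S → A → ℝ with |r(s,a)| ≤ M₁ for all s, a, where M₁ ≥ 0. Then the absolute value of the sum over all trajectories (s₁,…,s_{k+1+j}) ∈ S^{k+1+j} and (a₁,…,a_{k+1+j}) ∈ A^{k+1+j} of d(s₁) · (∏_{h=1}^{k+1+j} e(s_h, a_h)) · (∏_{h=1}^{k+j} P^{a_h}(s_h, s_{h+1})) · (∏_{h=1}^{j} π(s_h,a_h)/e(s_h,a_h)) · (∏_{h=j+1}^{k+1} (π(s_h,a_h)/e(s_h,a_h))²) · (∏_{h=k+2}^{k+1+j} π(s_h,a_h)/e(s_h,a_h)) · r(s_{k+1}, a_{k+1})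 · r(s_{k+1+j}, a_{k+1+j}) is at most M₁² · exp(ζ·(k−j+1)). -/
open Finset

private lemma chain_bound {S A : Type*} [Fintype S] [Nonempty S] [Fintype A]
    (P : A → S → S → ℝ) (hP : ∀ a, IsStochastic (P a)) :
    ∀ (n : ℕ) (w : Fin (n+1) → S → A → ℝ) (c : Fin (n+1) → ℝ),
      (∀ h s a, 0 ≤ w h s a) → (∀ h s, ∑ a, w h s a ≤ c h) →
      ∀ (d : S → ℝ), (∀ s, 0 ≤ d s) → (∑ s, d s ≤ 1) →
      ∑ s : Fin (n+1) → S, ∑ a : Fin (n+1) → A,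
        d (s 0) * (∏ h, w h (s h) (a h)) *
          (∏ h : Fin n, P (a h.castSucc) (s h.castSucc) (s h.succ)) ≤ ∏ h, c h := by
  intro n
  induction n with
  | zero =>
    intro w c hw hc d hd0 hd1
    have hc0 : ∀ h : Fin 1, 0 ≤ c h := by
      intro h
      obtain ⟨s⟩ := ‹Nonempty S›
      exact le_trans (Finset.sum_nonneg fun a _ => hw h s a) (hc h s)
    rw [← (Fin.consEquiv (fun _ : Fin 1 => S)).sum_comp, Fintype.sum_prod_type]
    have step : ∀ x : S, ∑ s' : Fin 0 → S, ∑ a : Fin 1 → A,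
        d ((Fin.cons x s' : Fin 1 → S) 0) * (∏ h, w h ((Fin.cons x s' : Fin 1 → S) h) (a h)) *
          (∏ h : Fin 0, P (a h.castSucc) ((Fin.cons x s' : Fin 1 → S) h.castSucc) ((Fin.cons x s' : Fin 1 → S) h.succ))
        = d x * ∑ b : A, w 0 x b := by
      intro x
      simp [Fin.prod_univ_one, ← (Equiv.funUnique (Fin 1) A).symm.sum_comp, Finset.mul_sum]
    calc ∑ x : S, ∑ s' : Fin 0 → S, ∑ a : Fin 1 → A,
          d ((Fin.cons x s' : Fin 1 → S) 0) * (∏ h, w h ((Fin.cons x s' : Fin 1 → S) h) (a h)) *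
            (∏ h : Fin 0, P (a h.castSucc) ((Fin.cons x s' : Fin 1 → S) h.castSucc) ((Fin.cons x s' : Fin 1 → S) h.succ))
        = ∑ x : S, d x * ∑ b : A, w 0 x b := Finset.sum_congr rfl fun x _ => step x
      _ ≤ ∑ x : S, d x * c 0 :=
          Finset.sum_le_sum fun x _ => mul_le_mul_of_nonneg_left (hc 0 x) (hd0 x)
      _ = (∑ x : S, d x) * c 0 := by rw [Finset.sum_mul]
      _ ≤ 1 * c 0 := mul_le_mul_of_nonneg_right hd1 (hc0 0)
      _ = ∏ h, c h := by simp
  | succ m ih =>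
    intro w c hw hc d hd0 hd1
    have hc0 : ∀ h : Fin (m+2), 0 ≤ c h := by
      intro h
      obtain ⟨s⟩ := ‹Nonempty S›
      exact le_trans (Finset.sum_nonneg fun a _ => hw h s a) (hc h s)
    rw [← (Fin.consEquiv (fun _ : Fin (m+2) => S)).sum_comp, Fintype.sum_prod_type]
    have key : ∀ (x : S) (s' : Fin (m+1) → S),
        ∑ a : Fin (m+2) → A,
          d ((Fin.cons x s' : Fin (m+2) → S) 0) *
            (∏ h, w h ((Fin.cons x s' : Fin (m+2) → S) h) (a h)) *
            (∏ h : Fin (m+1), P (a h.castSucc) ((Fin.cons x s' : Fin (m+2) → S) h.castSucc)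
              ((Fin.cons x s' : Fin (m+2) → S) h.succ))
        = ∑ b : A, ∑ a' : Fin (m+1) → A,
            d x * w 0 x b *
              ((P b x) (s' 0) * (∏ h : Fin (m+1), w h.succ (s' h) (a' h)) *
                (∏ h : Fin m, P (a' h.castSucc) (s' h.castSucc) (s' h.succ))) := by
      intro x s'
      rw [← (Fin.consEquiv (fun _ : Fin (m+2) => A)).sum_comp, Fintype.sum_prod_type]
      simp only [Fin.consEquiv_apply]
      refine Finset.sum_congr rfl fun b _ => Finset.sum_congr rfl fun a' _ => ?_
      have h1 : ∏ h, w h ((Fin.cons x s' : Fin (m+2) → S) h) ((Fin.cons b a' : Fin (m+2) → A) h)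
          = w 0 x b * ∏ h : Fin (m+1), w h.succ (s' h) (a' h) := by
        rw [Fin.prod_univ_succ]
        simp
      have h2 : (∏ h : Fin (m+1), P ((Fin.cons b a' : Fin (m+2) → A) h.castSucc)
            ((Fin.cons x s' : Fin (m+2) → S) h.castSucc) ((Fin.cons x s' : Fin (m+2) → S) h.succ))
          = (P b x) (s' 0) * ∏ h : Fin m, P (a' h.castSucc) (s' h.castSucc) (s' h.succ) := by
        rw [Fin.prod_univ_succ]
        simp [← Fin.succ_castSucc]
      rw [h1, h2, Fin.cons_zero]
      ring
    calc ∑ x : S, ∑ s' : Fin (m+1) → S, ∑ a : Fin (m+2) → A,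
          d ((Fin.cons x s' : Fin (m+2) → S) 0) *
            (∏ h, w h ((Fin.cons x s' : Fin (m+2) → S) h) (a h)) *
            (∏ h : Fin (m+1), P (a h.castSucc) ((Fin.cons x s' : Fin (m+2) → S) h.castSucc)
              ((Fin.cons x s' : Fin (m+2) → S) h.succ))
        = ∑ x : S, ∑ b : A, d x * w 0 x b *
            (∑ s' : Fin (m+1) → S, ∑ a' : Fin (m+1) → A,
              (P b x) (s' 0) * (∏ h : Fin (m+1), w h.succ (s' h) (a' h)) *
                (∏ h : Fin m, P (a' h.castSucc) (s' h.castSucc) (s' h.succ))) := by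
          refine Finset.sum_congr rfl fun x _ => ?_
          simp only [key]
          rw [Finset.sum_comm]
          refine Finset.sum_congr rfl fun b _ => ?_
          rw [Finset.mul_sum]
          refine Finset.sum_congr rfl fun s' _ => ?_
          rw [Finset.mul_sum]
      _ ≤ ∑ x : S, ∑ b : A, d x * w 0 x b * ∏ h : Fin (m+1), c h.succ := by
          refine Finset.sum_le_sum fun x _ => Finset.sum_le_sum fun b _ => ?_
          refine mul_le_mul_of_nonneg_left ?_ (mul_nonneg (hd0 x) (hw 0 x b))
          exact ih (fun h => w h.succ) (fun h => c h.succ) (fun h s a => hw h.succ s a)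
            (fun h s => hc h.succ s) (P b x) (fun s => (hP b).1 x s) (le_of_eq ((hP b).2 x))
      _ = (∑ x : S, d x * ∑ b : A, w 0 x b) * ∏ h : Fin (m+1), c h.succ := by
          rw [Finset.sum_mul]
          refine Finset.sum_congr rfl fun x _ => ?_
          simp [Finset.mul_sum, Finset.sum_mul, mul_assoc]
      _ ≤ (∑ x : S, d x * c 0) * ∏ h : Fin (m+1), c h.succ := by
          refine mul_le_mul_of_nonneg_right ?_ (Finset.prod_nonneg fun h _ => hc0 h.succ)
          exact Finset.sum_le_sum fun x _ => mul_le_mul_of_nonneg_left (hc 0 x) (hd0 x)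
      _ = (∑ x : S, d x) * (c 0 * ∏ h : Fin (m+1), c h.succ) := by
          rw [← Finset.sum_mul, mul_assoc]
      _ ≤ 1 * (c 0 * ∏ h : Fin (m+1), c h.succ) :=
          mul_le_mul_of_nonneg_right hd1
            (mul_nonneg (hc0 0) (Finset.prod_nonneg fun h _ => hc0 h.succ))
      _ = ∏ h, c h := (one_mul _).trans (Fin.prod_univ_succ c).symm

/-- Overlapping-block cross-moment bound: for overlapping windows at lag `j ≤ k`,
the absolute value of the importance-weighted cross-moment trajectory sum is at
most `M₁² * exp (ζ * (k − j + 1))`.  Trajectory indices are `0`-indexed, so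
`h.val < j` corresponds to the `1`-indexed range `1 ≤ h ≤ j`, `j ≤ h.val ≤ k` to
`j+1 ≤ h ≤ k+1`, and `k+1 ≤ h.val` to `k+2 ≤ h ≤ k+1+j`. -/
theorem overlapping_block_cross_moment_bound
    {S A : Type*} [Fintype S] [Nonempty S] [Fintype A] [Nonempty A]
    (P : A → S → S → ℝ) (hP : ∀ a, IsStochastic (P a))
    (e π : S → A → ℝ)
    (he : ∀ s, IsProbVec (e s)) (hπ : ∀ s, IsProbVec (π s))
    (hepos : ∀ s a, 0 < e s a)
    (ζ : ℝ) (hζ : 0 ≤ ζ) (hover : ∀ s a, π s a ≤ Real.exp ζ * e s a)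
    (d : S → ℝ) (hd : IsProbVec d)
    (k j : ℕ) (hj1 : 1 ≤ j) (hjk : j ≤ k)
    (M₁ : ℝ) (hM₁ : 0 ≤ M₁) (r : S → A → ℝ) (hr : ∀ s a, |r s a| ≤ M₁) :
    |∑ s : Fin (k + j + 1) → S, ∑ a : Fin (k + j + 1) → A,
        d (s 0) * (∏ h, e (s h) (a h)) *
          (∏ h : Fin (k + j), P (a h.castSucc) (s h.castSucc) (s h.succ)) *
          (∏ h ∈ Finset.univ.filter (fun h : Fin (k + j + 1) => h.val < j),
            π (s h) (a h) / e (s h) (a h)) *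
          (∏ h ∈ Finset.univ.filter (fun h : Fin (k + j + 1) => j ≤ h.val ∧ h.val ≤ k),
            (π (s h) (a h) / e (s h) (a h)) ^ 2) *
          (∏ h ∈ Finset.univ.filter (fun h : Fin (k + j + 1) => k + 1 ≤ h.val),
            π (s h) (a h) / e (s h) (a h)) *
          r (s ⟨k, by omega⟩) (a ⟨k, by omega⟩) *
          r (s (Fin.last (k + j))) (a (Fin.last (k + j)))|
      ≤ M₁ ^ 2 * Real.exp (ζ * ((k : ℝ) - j + 1)) := by
  set idxk : Fin (k + j + 1) := ⟨k, by omega⟩ with hidxkdef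
  set w : Fin (k + j + 1) → S → A → ℝ := fun h s a =>
    (if h = idxk then |r s a| else 1) * (if h = Fin.last (k + j) then |r s a| else 1) *
      π s a * (if j ≤ h.val ∧ h.val ≤ k then π s a / e s a else 1) with hwdef
  set c : Fin (k + j + 1) → ℝ := fun h =>
    (if h = idxk then M₁ else 1) * (if h = Fin.last (k + j) then M₁ else 1) *
      (if j ≤ h.val ∧ h.val ≤ k then Real.exp ζ else 1) with hcdef
  have hw : ∀ h s a, 0 ≤ w h s a := by
    intro h s a
    refine mul_nonneg (mul_nonneg (mul_nonneg ?_ ?_) ((hπ s).1 a)) ?_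
    · split <;> [exact abs_nonneg _; exact zero_le_one]
    · split <;> [exact abs_nonneg _; exact zero_le_one]
    · split <;> [exact div_nonneg ((hπ s).1 a) (hepos s a).le; exact zero_le_one]
  have hc : ∀ h s, ∑ a, w h s a ≤ c h := by
    intro h s
    have step : ∀ a, w h s a ≤ (if h = idxk then M₁ else 1) *
        (if h = Fin.last (k + j) then M₁ else 1) *
        (if j ≤ h.val ∧ h.val ≤ k then Real.exp ζ else 1) * π s a := by
      intro a
      have h1 : (if h = idxk then |r s a| else 1) ≤ (if h = idxk then M₁ else 1) := by
        split <;> [exact hr s a; exact le_rfl]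
      have h2 : (if h = Fin.last (k + j) then |r s a| else 1)
          ≤ (if h = Fin.last (k + j) then M₁ else 1) := by
        split <;> [exact hr s a; exact le_rfl]
      have h3 : (if j ≤ h.val ∧ h.val ≤ k then π s a / e s a else 1)
          ≤ (if j ≤ h.val ∧ h.val ≤ k then Real.exp ζ else 1) := by
        split
        · rw [div_le_iff₀ (hepos s a)]
          exact hover s a
        · exact le_rfl
      calc w h s a = (if h = idxk then |r s a| else 1) *
            (if h = Fin.last (k + j) then |r s a| else 1) *
            (if j ≤ h.val ∧ h.val ≤ k then π s a / e s a else 1) * π s a := by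
            rw [hwdef]; ring
        _ ≤ (if h = idxk then M₁ else 1) * (if h = Fin.last (k + j) then M₁ else 1) *
            (if j ≤ h.val ∧ h.val ≤ k then Real.exp ζ else 1) * π s a := by
            refine mul_le_mul_of_nonneg_right ?_ ((hπ s).1 a)
            have n1 : (0:ℝ) ≤ if h = idxk then M₁ else 1 := by split <;> [exact hM₁; norm_num]
            have n2 : (0:ℝ) ≤ if h = Fin.last (k+j) then M₁ else 1 := by
              split <;> [exact hM₁; norm_num]
            have p1 : (0:ℝ) ≤ if h = idxk then |r s a| else 1 := by
              split <;> [exact abs_nonneg _; norm_num]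
            have p2 : (0:ℝ) ≤ if h = Fin.last (k+j) then |r s a| else 1 := by
              split <;> [exact abs_nonneg _; norm_num]
            have p3 : (0:ℝ) ≤ if j ≤ h.val ∧ h.val ≤ k then π s a / e s a else 1 := by
              split <;> [exact div_nonneg ((hπ s).1 a) (hepos s a).le; norm_num]
            exact mul_le_mul (mul_le_mul h1 h2 p2 n1) h3 p3 (mul_nonneg n1 n2)
    calc ∑ a, w h s a ≤ ∑ a, (if h = idxk then M₁ else 1) *
          (if h = Fin.last (k + j) then M₁ else 1) *
          (if j ≤ h.val ∧ h.val ≤ k then Real.exp ζ else 1) * π s a :=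
        Finset.sum_le_sum fun a _ => step a
      _ = c h := by rw [← Finset.mul_sum, (hπ s).2, mul_one, hcdef]
  -- pointwise identity for the absolute value of each term
  have ptwise : ∀ (s : Fin (k + j + 1) → S) (a : Fin (k + j + 1) → A),
      |d (s 0) * (∏ h, e (s h) (a h)) *
          (∏ h : Fin (k + j), P (a h.castSucc) (s h.castSucc) (s h.succ)) *
          (∏ h ∈ Finset.univ.filter (fun h : Fin (k + j + 1) => h.val < j),
            π (s h) (a h) / e (s h) (a h)) *
          (∏ h ∈ Finset.univ.filter (fun h : Fin (k + j + 1) => j ≤ h.val ∧ h.val ≤ k),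
            (π (s h) (a h) / e (s h) (a h)) ^ 2) *
          (∏ h ∈ Finset.univ.filter (fun h : Fin (k + j + 1) => k + 1 ≤ h.val),
            π (s h) (a h) / e (s h) (a h)) *
          r (s ⟨k, by omega⟩) (a ⟨k, by omega⟩) *
          r (s (Fin.last (k + j))) (a (Fin.last (k + j)))|
      = d (s 0) * (∏ h, w h (s h) (a h)) *
          (∏ h : Fin (k + j), P (a h.castSucc) (s h.castSucc) (s h.succ)) := by
    intro s a
    have hE : (0:ℝ) ≤ ∏ h, e (s h) (a h) := Finset.prod_nonneg fun h _ => ((he _).1 _)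
    have hPp : (0:ℝ) ≤ ∏ h : Fin (k + j), P (a h.castSucc) (s h.castSucc) (s h.succ) :=
      Finset.prod_nonneg fun h _ => (hP _).1 _ _
    have hF1 : (0:ℝ) ≤ ∏ h ∈ Finset.univ.filter (fun h : Fin (k + j + 1) => h.val < j),
        π (s h) (a h) / e (s h) (a h) :=
      Finset.prod_nonneg fun h _ => div_nonneg ((hπ _).1 _) (hepos _ _).le
    have hF2 : (0:ℝ) ≤ ∏ h ∈ Finset.univ.filter
        (fun h : Fin (k + j + 1) => j ≤ h.val ∧ h.val ≤ k),
        (π (s h) (a h) / e (s h) (a h)) ^ 2 :=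
      Finset.prod_nonneg fun h _ => sq_nonneg _
    have hF3 : (0:ℝ) ≤ ∏ h ∈ Finset.univ.filter (fun h : Fin (k + j + 1) => k + 1 ≤ h.val),
        π (s h) (a h) / e (s h) (a h) :=
      Finset.prod_nonneg fun h _ => div_nonneg ((hπ _).1 _) (hepos _ _).le
    have main : ∏ h, w h (s h) (a h)
        = (∏ h, e (s h) (a h)) *
          (∏ h ∈ Finset.univ.filter (fun h : Fin (k + j + 1) => h.val < j),
            π (s h) (a h) / e (s h) (a h)) *
          (∏ h ∈ Finset.univ.filter (fun h : Fin (k + j + 1) => j ≤ h.val ∧ h.val ≤ k),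
            (π (s h) (a h) / e (s h) (a h)) ^ 2) *
          (∏ h ∈ Finset.univ.filter (fun h : Fin (k + j + 1) => k + 1 ≤ h.val),
            π (s h) (a h) / e (s h) (a h)) *
          |r (s idxk) (a idxk)| * |r (s (Fin.last (k + j))) (a (Fin.last (k + j)))| := by
      have e1 : (∏ h ∈ Finset.univ.filter (fun h : Fin (k + j + 1) => h.val < j),
          π (s h) (a h) / e (s h) (a h))
          = ∏ h, (if h.val < j then π (s h) (a h) / e (s h) (a h) else 1) :=
        Finset.prod_filter _ _
      have e2 : (∏ h ∈ Finset.univ.filter (fun h : Fin (k + j + 1) => j ≤ h.val ∧ h.val ≤ k),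
          (π (s h) (a h) / e (s h) (a h)) ^ 2)
          = ∏ h, (if j ≤ h.val ∧ h.val ≤ k then (π (s h) (a h) / e (s h) (a h)) ^ 2 else 1) :=
        Finset.prod_filter _ _
      have e3 : (∏ h ∈ Finset.univ.filter (fun h : Fin (k + j + 1) => k + 1 ≤ h.val),
          π (s h) (a h) / e (s h) (a h))
          = ∏ h, (if k + 1 ≤ h.val then π (s h) (a h) / e (s h) (a h) else 1) :=
        Finset.prod_filter _ _
      have e4 : |r (s idxk) (a idxk)|
          = ∏ h, (if h = idxk then |r (s h) (a h)| else 1) := by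
        rw [Finset.prod_ite_eq' Finset.univ idxk (fun h => |r (s h) (a h)|)]
        simp
      have e5 : |r (s (Fin.last (k + j))) (a (Fin.last (k + j)))|
          = ∏ h, (if h = Fin.last (k + j) then |r (s h) (a h)| else 1) := by
        rw [Finset.prod_ite_eq' Finset.univ (Fin.last (k+j)) (fun h => |r (s h) (a h)|)]
        simp
      rw [e1, e2, e3, e4, e5, ← Finset.prod_mul_distrib, ← Finset.prod_mul_distrib,
        ← Finset.prod_mul_distrib, ← Finset.prod_mul_distrib, ← Finset.prod_mul_distrib]
      refine Finset.prod_congr rfl fun h _ => ?_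
      have hy : e (s h) (a h) ≠ 0 := (hepos _ _).ne'
      have hk1 : (h = idxk) ↔ (h.val = k) := by
        rw [hidxkdef, Fin.ext_iff]
      have hk2 : (h = Fin.last (k + j)) ↔ (h.val = k + j) := by
        rw [Fin.ext_iff]; rfl
      simp only [hwdef, hk1, hk2]
      have hhlt : h.val < k + j + 1 := h.isLt
      split_ifs <;> first | omega | (field_simp; try ring)
    rw [abs_mul, abs_mul, abs_mul, abs_mul, abs_mul, abs_mul, abs_mul,
      abs_of_nonneg (hd.1 _), abs_of_nonneg hE, abs_of_nonneg hPp,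
      abs_of_nonneg hF1, abs_of_nonneg hF2, abs_of_nonneg hF3, main]
    ring
  -- product of the c's
  have hprodc : ∏ h, c h = M₁ ^ 2 * Real.exp (ζ * ((k : ℝ) - j + 1)) := by
    rw [hcdef]
    rw [Finset.prod_mul_distrib, Finset.prod_mul_distrib]
    have p1 : (∏ h : Fin (k+j+1), if h = idxk then M₁ else 1) = M₁ := by
      rw [Finset.prod_ite_eq' Finset.univ idxk (fun _ => M₁)]
      simp
    have p2 : (∏ h : Fin (k+j+1), if h = Fin.last (k+j) then M₁ else 1) = M₁ := by
      rw [Finset.prod_ite_eq' Finset.univ (Fin.last (k+j)) (fun _ => M₁)]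
      simp
    have hcard : (Finset.univ.filter (fun h : Fin (k + j + 1) => j ≤ h.val ∧ h.val ≤ k)).card
        = k + 1 - j := by
      have hicc : Finset.univ.filter (fun h : Fin (k + j + 1) => j ≤ h.val ∧ h.val ≤ k)
          = Finset.Icc (⟨j, by omega⟩ : Fin (k+j+1)) ⟨k, by omega⟩ := by
        ext h
        simp [Fin.le_def]
      rw [hicc, Fin.card_Icc]
    have p3 : (∏ h : Fin (k+j+1), if j ≤ h.val ∧ h.val ≤ k then Real.exp ζ else 1)
        = Real.exp (ζ * ((k : ℝ) - j + 1)) := by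
      rw [← Finset.prod_filter, Finset.prod_const, hcard, ← Real.exp_nat_mul]
      congr 1
      rw [Nat.cast_sub (by omega : j ≤ k + 1)]
      push_cast
      ring
    rw [p1, p2, p3]
    ring
  calc |∑ s : Fin (k + j + 1) → S, ∑ a : Fin (k + j + 1) → A,
        d (s 0) * (∏ h, e (s h) (a h)) *
          (∏ h : Fin (k + j), P (a h.castSucc) (s h.castSucc) (s h.succ)) *
          (∏ h ∈ Finset.univ.filter (fun h : Fin (k + j + 1) => h.val < j),
            π (s h) (a h) / e (s h) (a h)) *
          (∏ h ∈ Finset.univ.filter (fun h : Fin (k + j + 1) => j ≤ h.val ∧ h.val ≤ k),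
            (π (s h) (a h) / e (s h) (a h)) ^ 2) *
          (∏ h ∈ Finset.univ.filter (fun h : Fin (k + j + 1) => k + 1 ≤ h.val),
            π (s h) (a h) / e (s h) (a h)) *
          r (s ⟨k, by omega⟩) (a ⟨k, by omega⟩) *
          r (s (Fin.last (k + j))) (a (Fin.last (k + j)))|
      ≤ ∑ s : Fin (k + j + 1) → S, ∑ a : Fin (k + j + 1) → A,
        |d (s 0) * (∏ h, e (s h) (a h)) *
          (∏ h : Fin (k + j), P (a h.castSucc) (s h.castSucc) (s h.succ)) *
          (∏ h ∈ Finset.univ.filter (fun h : Fin (k + j + 1) => h.val < j),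
            π (s h) (a h) / e (s h) (a h)) *
          (∏ h ∈ Finset.univ.filter (fun h : Fin (k + j + 1) => j ≤ h.val ∧ h.val ≤ k),
            (π (s h) (a h) / e (s h) (a h)) ^ 2) *
          (∏ h ∈ Finset.univ.filter (fun h : Fin (k + j + 1) => k + 1 ≤ h.val),
            π (s h) (a h) / e (s h) (a h)) *
          r (s ⟨k, by omega⟩) (a ⟨k, by omega⟩) *
          r (s (Fin.last (k + j))) (a (Fin.last (k + j)))| :=
        (Finset.abs_sum_le_sum_abs _ _).trans
          (Finset.sum_le_sum fun s _ => Finset.abs_sum_le_sum_abs _ _)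
    _ = ∑ s : Fin (k + j + 1) → S, ∑ a : Fin (k + j + 1) → A,
        d (s 0) * (∏ h, w h (s h) (a h)) *
          (∏ h : Fin (k + j), P (a h.castSucc) (s h.castSucc) (s h.succ)) :=
        Finset.sum_congr rfl fun s _ => Finset.sum_congr rfl fun a _ => ptwise s a
    _ ≤ ∏ h, c h :=
        chain_bound P hP (k + j) w c hw hc d hd.1 hd.2.le
    _ = M₁ ^ 2 * Real.exp (ζ * ((k : ℝ) - j + 1)) := hprodc
end

section
/- Rate computation for the tuned window length (Corollary 1, arithmetic form): Let t₀, ζ, C₀, M₁, M₂ > 0. There exists a constant C₁ > 0, depending only on t₀, ζ, C₀, M₁, M₂, such that for every natural number n ≥ 1 and every real N ≥ 1, taking the real window length k = (t₀/(t₀·ζ + 2)) · log(C₀·N), one has 4·M₁²·exp(−2·k/t₀) + (exp(ζ·k)/N)·( M₂ + 2·M₁²·exp(ζ)/(exp(ζ)−1) ) + 4·M₁²·exp(−k/t₀)/((1 − exp(−1/t₀))·N) + M₁²/n ≤ C₁ · N^{−2/(t₀·ζ+2)} + M₁²/n. In particular, with N = n·(T−k), the mean-squared-error bound of Theorem 1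 decays polynomially in n·T with exponent −2/(t₀·ζ+2), up to the M₁²/n term. -/
/-- Rate computation for the tuned window length (Corollary 1, arithmetic form):
with the real window length `k = (t₀/(t₀ ζ + 2)) log (C₀ N)`, the
mean-squared-error bound of Theorem 1 (with `n (T − k)` abstracted as `N`) is at
most `C₁ N^{−2/(t₀ ζ + 2)} + M₁²/n` for a constant `C₁` depending only on
`t₀, ζ, C₀, M₁, M₂`. -/
theorem tuned_window_rate
    (t₀ ζ C₀ M₁ M₂ : ℝ) (ht₀ : 0 < t₀) (hζ : 0 < ζ) (hC₀ : 0 < C₀)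
    (hM₁ : 0 < M₁) (hM₂ : 0 < M₂) :
    ∃ C₁ : ℝ, 0 < C₁ ∧ ∀ n : ℕ, 1 ≤ n → ∀ N : ℝ, 1 ≤ N →
      4 * M₁ ^ 2 * Real.exp (-2 * ((t₀ / (t₀ * ζ + 2)) * Real.log (C₀ * N)) / t₀)
        + (Real.exp (ζ * ((t₀ / (t₀ * ζ + 2)) * Real.log (C₀ * N))) / N) *
            (M₂ + 2 * M₁ ^ 2 * Real.exp ζ / (Real.exp ζ - 1))
        + 4 * M₁ ^ 2 * Real.exp (-((t₀ / (t₀ * ζ + 2)) * Real.log (C₀ * N)) / t₀) /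
            ((1 - Real.exp (-1 / t₀)) * N)
        + M₁ ^ 2 / (n : ℝ)
      ≤ C₁ * N ^ (-(2 / (t₀ * ζ + 2))) + M₁ ^ 2 / (n : ℝ) := by
  set s := t₀ * ζ + 2 with hs
  have hs2 : (2:ℝ) < s := by nlinarith
  have hs0 : (0:ℝ) < s := by linarith
  have hsne : s ≠ 0 := ne_of_gt hs0
  have ht0ne : t₀ ≠ 0 := ne_of_gt ht₀
  have he1 : (0:ℝ) < Real.exp ζ - 1 := by
    have : (1:ℝ) < Real.exp ζ := by
      calc (1:ℝ) = Real.exp 0 := Real.exp_zero.symm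
      _ < Real.exp ζ := Real.exp_lt_exp.mpr hζ
    linarith
  have hB : 0 < M₂ + 2 * M₁ ^ 2 * Real.exp ζ / (Real.exp ζ - 1) := by
    have := div_pos (by positivity : (0:ℝ) < 2 * M₁ ^ 2 * Real.exp ζ) he1
    linarith
  have hd : 0 < 1 - Real.exp (-1 / t₀) := by
    have : Real.exp (-1 / t₀) < 1 :=
      by simpa using Real.exp_lt_one_iff.mpr (div_neg_of_neg_of_pos (by norm_num) ht₀)
    linarith
  refine ⟨4 * M₁ ^ 2 * C₀ ^ (-(2/s)) + C₀ ^ (ζ * t₀ / s) *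
      (M₂ + 2 * M₁ ^ 2 * Real.exp ζ / (Real.exp ζ - 1)) +
      4 * M₁ ^ 2 * C₀ ^ (-(1/s)) / (1 - Real.exp (-1 / t₀)), ?_, ?_⟩
  · have h1 : (0:ℝ) < 4 * M₁ ^ 2 * C₀ ^ (-(2/s)) := by positivity
    have h2 : (0:ℝ) < C₀ ^ (ζ * t₀ / s) * (M₂ + 2 * M₁ ^ 2 * Real.exp ζ / (Real.exp ζ - 1)) :=
      mul_pos (by positivity) hB
    have h3 : (0:ℝ) < 4 * M₁ ^ 2 * C₀ ^ (-(1/s)) / (1 - Real.exp (-1 / t₀)) :=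
      div_pos (by positivity) hd
    linarith
  intro n hn N hN
  have hN0 : (0:ℝ) < N := by linarith
  have hu : (0:ℝ) < C₀ * N := by positivity
  have e1 : Real.exp (-2 * ((t₀ / s) * Real.log (C₀ * N)) / t₀) = (C₀ * N) ^ (-(2/s)) := by
    rw [Real.rpow_def_of_pos hu, Real.exp_eq_exp]
    field_simp
  have e2 : Real.exp (ζ * ((t₀ / s) * Real.log (C₀ * N))) = (C₀ * N) ^ (ζ * t₀ / s) := by
    rw [Real.rpow_def_of_pos hu, Real.exp_eq_exp]
    field_simp
  have e3 : Real.exp (-((t₀ / s) * Real.log (C₀ * N)) / t₀) = (C₀ * N) ^ (-(1/s)) := by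
    rw [Real.rpow_def_of_pos hu, Real.exp_eq_exp]
    field_simp
  rw [e1, e2, e3, Real.mul_rpow hC₀.le hN0.le, Real.mul_rpow hC₀.le hN0.le,
    Real.mul_rpow hC₀.le hN0.le]
  have key2 : N ^ (ζ * t₀ / s) / N = N ^ (-(2/s)) := by
    have hx : ζ * t₀ / s - 1 = -(2/s) := by field_simp; ring
    rw [← hx, Real.rpow_sub hN0, Real.rpow_one]
  have key3 : N ^ (-(1/s)) / N ≤ N ^ (-(2/s)) := by
    have hx : N ^ (-(1/s)) / N = N ^ (-(1/s) - 1) := by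
      rw [Real.rpow_sub hN0, Real.rpow_one]
    rw [hx]
    apply Real.rpow_le_rpow_of_exponent_le hN
    have h1s : 1 / s ≤ 1 := by rw [div_le_one hs0]; linarith
    linarith [h1s, (by ring : (2:ℝ)/s = 2*(1/s))]
  refine add_le_add ?_ le_rfl
  have h2' : C₀ ^ (ζ * t₀ / s) * N ^ (ζ * t₀ / s) / N *
      (M₂ + 2 * M₁ ^ 2 * Real.exp ζ / (Real.exp ζ - 1)) =
      C₀ ^ (ζ * t₀ / s) * (M₂ + 2 * M₁ ^ 2 * Real.exp ζ / (Real.exp ζ - 1)) * N ^ (-(2/s)) := by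
    rw [mul_div_assoc, key2]; ring
  have h3' : 4 * M₁ ^ 2 * (C₀ ^ (-(1/s)) * N ^ (-(1/s))) / ((1 - Real.exp (-1 / t₀)) * N) ≤
      4 * M₁ ^ 2 * C₀ ^ (-(1/s)) / (1 - Real.exp (-1 / t₀)) * N ^ (-(2/s)) := by
    have : 4 * M₁ ^ 2 * (C₀ ^ (-(1/s)) * N ^ (-(1/s))) / ((1 - Real.exp (-1 / t₀)) * N) =
        4 * M₁ ^ 2 * C₀ ^ (-(1/s)) / (1 - Real.exp (-1 / t₀)) * (N ^ (-(1/s)) / N) := by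
      field_simp
    rw [this]
    have hc : (0:ℝ) ≤ 4 * M₁ ^ 2 * C₀ ^ (-(1/s)) / (1 - Real.exp (-1 / t₀)) :=
      le_of_lt (div_pos (by positivity) hd)
    exact mul_le_mul_of_nonneg_left key3 hc
  calc 4 * M₁ ^ 2 * (C₀ ^ (-(2/s)) * N ^ (-(2/s)))
        + C₀ ^ (ζ * t₀ / s) * N ^ (ζ * t₀ / s) / N *
            (M₂ + 2 * M₁ ^ 2 * Real.exp ζ / (Real.exp ζ - 1))
        + 4 * M₁ ^ 2 * (C₀ ^ (-(1/s)) * N ^ (-(1/s))) / ((1 - Real.exp (-1 / t₀)) * N)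
      ≤ 4 * M₁ ^ 2 * C₀ ^ (-(2/s)) * N ^ (-(2/s))
        + C₀ ^ (ζ * t₀ / s) * (M₂ + 2 * M₁ ^ 2 * Real.exp ζ / (Real.exp ζ - 1)) * N ^ (-(2/s))
        + 4 * M₁ ^ 2 * C₀ ^ (-(1/s)) / (1 - Real.exp (-1 / t₀)) * N ^ (-(2/s)) := by
        rw [h2']
        exact add_le_add (add_le_add (le_of_eq (by ring)) le_rfl) h3'
    _ = (4 * M₁ ^ 2 * C₀ ^ (-(2/s)) + C₀ ^ (ζ * t₀ / s) *
          (M₂ + 2 * M₁ ^ 2 * Real.exp ζ / (Real.exp ζ - 1)) +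
          4 * M₁ ^ 2 * C₀ ^ (-(1/s)) / (1 - Real.exp (-1 / t₀))) * N ^ (-(2/s)) := by ring
end

section
/- Stationary distribution of the reset chain (key computation underlying Lemmas 4 and 5): Fix an integer Q ≥ 2 and p ∈ [0,1]. Define the Q × Q matrix P on states {1,…,Q} by: for every state j, P(j, 1) = 1−p, P(j, min(j+1, Q)) = p, and all other entries are 0. Then P is row-stochastic, and the vector v on {1,…,Q} defined by v(j) = (1−p)·p^{j−1} for 1 ≤ j ≤ Q−1 and v(Q) = p^{Q−1} is a probability vector satisfying v ⬝ P = v. In particular, the stationary probability of the last state equals p^{Q−1}. -/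
open Finset

/-- Stationary distribution of the reset chain: states are `0`-indexed, so state
`1` of the paper is index `0` and state `Q` is index `Q−1`.  Each row moves to
state `1` with probability `1−p` and to state `min(j+1, Q)` with probability `p`.
The vector `v(j) = (1−p) p^{j−1}` for `j < Q`, `v(Q) = p^{Q−1}` is a stationary
probability vector, and the stationary mass of the last state is `p^{Q−1}`. -/
theorem reset_chain_stationary
    (Q : ℕ) (hQ : 2 ≤ Q) (p : ℝ) (hp : p ∈ Set.Icc (0 : ℝ) 1) :
    let P : Fin Q → Fin Q → ℝ := fun j i =>
      (if i = (⟨0, by omega⟩ : Fin Q) then 1 - p else 0) +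
        (if i = (⟨min (j.val + 1) (Q - 1), by omega⟩ : Fin Q) then p else 0)
    let v : Fin Q → ℝ := fun i =>
      if i.val = Q - 1 then p ^ (Q - 1) else (1 - p) * p ^ i.val
    IsStochastic P ∧ IsProbVec v ∧ rowAct P v = v ∧
      v ⟨Q - 1, by omega⟩ = p ^ (Q - 1) := by
  obtain ⟨hp0, hp1⟩ := hp
  intro P v
  have hQ0 : 0 < Q := by omega
  have geo : (1 - p) * ∑ i ∈ Finset.range (Q - 1), p ^ i = 1 - p ^ (Q - 1) := by
    have := geom_sum_mul p (Q - 1)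
    nlinarith [this]
  have hsumv : ∑ i, v i = 1 := by
    have h1 : ∑ i, v i = ∑ i ∈ Finset.range Q,
        (if i = Q - 1 then p ^ (Q - 1) else (1 - p) * p ^ i) := by
      rw [Finset.sum_range fun i => (if i = Q - 1 then p ^ (Q - 1) else (1 - p) * p ^ i)]
    have hins : Finset.range Q = insert (Q - 1) (Finset.range (Q - 1)) := by
      rw [← Finset.range_add_one]; congr 1; omega
    rw [h1, hins, Finset.sum_insert (by simp)]
    have h2 : ∑ i ∈ Finset.range (Q - 1),
        (if i = Q - 1 then p ^ (Q - 1) else (1 - p) * p ^ i)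
        = ∑ i ∈ Finset.range (Q - 1), (1 - p) * p ^ i := by
      apply Finset.sum_congr rfl
      intro i hi
      rw [Finset.mem_range] at hi
      rw [if_neg (by omega)]
    rw [h2, ← Finset.mul_sum, geo, if_pos rfl]
    ring
  have hv0 : ∀ i, 0 ≤ v i := by
    intro i
    simp only [v]
    split
    · positivity
    · have : 0 ≤ 1 - p := by linarith
      positivity
  refine ⟨⟨?_, ?_⟩, ⟨hv0, hsumv⟩, ?_, ?_⟩
  · intro j i
    simp only [P]
    apply add_nonneg
    · by_cases h : i = (⟨0, by omega⟩ : Fin Q)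
      · rw [if_pos h]; linarith
      · rw [if_neg h]
    · by_cases h : i = (⟨min (j.val + 1) (Q - 1), by omega⟩ : Fin Q)
      · rw [if_pos h]; exact hp0
      · rw [if_neg h]
  · intro j
    simp only [P]
    rw [Finset.sum_add_distrib, Finset.sum_ite_eq' Finset.univ, Finset.sum_ite_eq' Finset.univ]
    simp
  · funext i
    simp only [rowAct]
    have hexp : ∀ j : Fin Q, v j * P j i =
        v j * (if i = (⟨0, by omega⟩ : Fin Q) then 1 - p else 0) +
        v j * (if i = (⟨min (j.val + 1) (Q - 1), by omega⟩ : Fin Q) then p else 0) := by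
      intro j; simp only [P]; ring
    rw [Finset.sum_congr rfl (fun j _ => hexp j), Finset.sum_add_distrib,
      ← Finset.sum_mul, hsumv, one_mul]
    by_cases hi0 : i.val = 0
    · have h2 : ∑ j : Fin Q, v j *
          (if i = (⟨min (j.val + 1) (Q - 1), by omega⟩ : Fin Q) then p else 0) = 0 := by
        apply Finset.sum_eq_zero
        intro j _
        rw [if_neg]
        · ring
        · intro h
          have h' : i.val = min (j.val + 1) (Q - 1) := congrArg Fin.val h
          omega
      rw [h2, if_pos (Fin.ext hi0)]
      simp only [v]
      rw [if_neg (by omega), hi0]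
      simp
    · have hfst : (if i = (⟨0, by omega⟩ : Fin Q) then (1:ℝ) - p else 0) = 0 := by
        rw [if_neg]
        intro h
        exact hi0 (congrArg Fin.val h)
      rw [hfst, zero_add]
      by_cases hilast : i.val = Q - 1
      · -- i = Q-1: two contributing j's
        have h2 : ∑ j : Fin Q, v j *
            (if i = (⟨min (j.val + 1) (Q - 1), by omega⟩ : Fin Q) then p else 0)
            = ∑ j : Fin Q, (if j ∈ ({(⟨Q-2, by omega⟩ : Fin Q), ⟨Q-1, by omega⟩} : Finset (Fin Q))
              then v j * p else 0) := by
          apply Finset.sum_congr rfl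
          intro j _
          by_cases h : Q - 2 ≤ j.val
          · rw [if_pos (Fin.ext (show i.val = min (j.val + 1) (Q - 1) by omega)),
              if_pos]
            apply Finset.mem_insert.mpr
            have : j.val = Q - 2 ∨ j.val = Q - 1 := by omega
            rcases this with h' | h'
            · exact Or.inl (Fin.ext h')
            · exact Or.inr (Finset.mem_singleton.mpr (Fin.ext h'))
          · rw [if_neg, if_neg]
            · ring
            · intro hmem
              rcases Finset.mem_insert.mp hmem with h' | h'
              · have hv' : j.val = Q - 2 := congrArg Fin.val h'
                omega
              · have hv' : j.val = Q - 1 :=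
                  congrArg Fin.val (Finset.mem_singleton.mp h')
                omega
            · intro hh
              have h' : i.val = min (j.val + 1) (Q - 1) := congrArg Fin.val hh
              omega
        rw [h2, Finset.sum_ite_mem, Finset.univ_inter, Finset.sum_pair
          (by intro h; have hv' : Q - 2 = Q - 1 := congrArg Fin.val h; omega)]
        simp only [v]
        rw [if_neg (show ¬ (Q - 2 = Q - 1) by omega)]
        rw [if_true, if_pos hilast]
        have h3 : p ^ (Q - 1) = p ^ (Q - 2) * p := by
          rw [← pow_succ]; congr 1; omega
        rw [h3]; ring
      · -- 0 < i < Q-1: single contributing j = i-1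
        have hiQ : i.val < Q := i.isLt
        have h2 : ∑ j : Fin Q, v j *
            (if i = (⟨min (j.val + 1) (Q - 1), by omega⟩ : Fin Q) then p else 0)
            = v ⟨i.val - 1, by omega⟩ * p := by
          rw [Finset.sum_eq_single_of_mem (⟨i.val - 1, by omega⟩ : Fin Q) (Finset.mem_univ _)
            (fun j _ hj => by
              rw [if_neg]
              · ring
              · intro h
                have h' : i.val = min (j.val + 1) (Q - 1) := congrArg Fin.val h
                exact hj (Fin.ext (show j.val = i.val - 1 by omega)))]
          rw [if_pos (Fin.ext (show i.val = min (i.val - 1 + 1) (Q - 1) by omega))]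
        rw [h2]
        simp only [v]
        rw [if_neg (show ¬ (i.val - 1 = Q - 1) by omega), if_neg hilast]
        have h3 : p ^ i.val = p ^ (i.val - 1) * p := by
          rw [← pow_succ]; congr 1; omega
        rw [h3]; ring
  · simp only [v]
    rw [if_true]
end
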